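/- arXiv:1907.05368 — 2 statements merged into one kernel-verified Lean document; each statement's English description precedes it below -/
import Mathlib

section
/- Let w be a word over the alphabet {a, ā, b, b̄}. If for every normal subgroup U of finite index in the free group F on the four free generators a, ā, b, b̄ there exists a word w' in the one-sided Dyck language D'₂* whose image in F lies in the same coset of U as the image of w, then w belongs to the two-sided Dyck language D₂*. That is, the closure of D'₂* in the free monoid M (in the topology induced from the profinite topology on F) is contained in D₂*. -/
/-- The four-letter alphabet `{a, ā, b, b̄}`. -/
inductive Letter : Type
  | a | abar | b | bbar
  deriving DecidableEq

/-- The "formal inverse" letter: `a ↦ ā`, `ā ↦ a`, `b ↦ b̄`, `b̄ ↦ b`. -/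
def Letter.bar : Letter → Letter
  | .a => .abar
  | .abar => .a
  | .b => .bbar
  | .bbar => .b

/-- The free monoid `M` on the four letters. -/
abbrev M : Type := FreeMonoid Letter

/-- The free group `F` on the four free generators. -/
abbrev F : Type := FreeGroup Letter

/-- The canonical embedding `M → F`. -/
def emb : M →* F := FreeMonoid.lift (FreeGroup.of : Letter → F)

/-- The one-sided (restricted) Dyck language `D'₂*`: the smallest subset of `M`
containing the empty word, closed under concatenation and under
`w ↦ a·w·ā` and `w ↦ b·w·b̄`. -/
inductive OneDyck : M → Prop
  | empty : OneDyck 1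
  | mul {u v : M} : OneDyck u → OneDyck v → OneDyck (u * v)
  | brA {u : M} : OneDyck u →
      OneDyck (FreeMonoid.of Letter.a * u * FreeMonoid.of Letter.abar)
  | brB {u : M} : OneDyck u →
      OneDyck (FreeMonoid.of Letter.b * u * FreeMonoid.of Letter.bbar)

/-- One reduction step: deletion of an adjacent two-letter factor
`aā`, `āa`, `bb̄` or `b̄b`. -/
inductive PairDeletion : M → M → Prop
  | step (u v : M) (l : Letter) :
      PairDeletion (u * FreeMonoid.of l * FreeMonoid.of l.bar * v) (u * v)

/-- The two-sided (unrestricted) Dyck language `D₂*`: words reducing to the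
empty word by successive deletions of adjacent factors `aā`, `āa`, `bb̄`, `b̄b`. -/
def TwoDyck (w : M) : Prop := Relation.ReflTransGen PairDeletion w 1

/-- The two generators `x, y` of `F₂`. -/
inductive Gen : Type
  | x | y
  deriving DecidableEq

/-- The free group `F₂` on the two free generators `x, y`. -/
abbrev F₂ : Type := FreeGroup Gen

/-- The homomorphism `φ : F → F₂` with `φ(a) = x`, `φ(ā) = x⁻¹`,
`φ(b) = y`, `φ(b̄) = y⁻¹`. -/
def phi : F →* F₂ := FreeGroup.lift fun l => match l with
  | .a => FreeGroup.of Gen.x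
  | .abar => (FreeGroup.of Gen.x)⁻¹
  | .b => FreeGroup.of Gen.y
  | .bbar => (FreeGroup.of Gen.y)⁻¹
/-! ### Auxiliary machinery -/

section Aux

/-- Translation `Letter → Gen × Bool`. -/
def gmap : Letter → Gen × Bool
  | .a => (Gen.x, true)
  | .abar => (Gen.x, false)
  | .b => (Gen.y, true)
  | .bbar => (Gen.y, false)

/-- Translation `Gen × Bool → Letter`. -/
def hmap : Gen × Bool → Letter
  | (Gen.x, true) => .a
  | (Gen.x, false) => .abar
  | (Gen.y, true) => .b
  | (Gen.y, false) => .bbar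

lemma hmap_gmap (l : Letter) : hmap (gmap l) = l := by cases l <;> rfl

lemma hmap_not (x : Gen) (b : Bool) : hmap (x, !b) = (hmap (x, b)).bar := by
  cases x <;> cases b <;> rfl

lemma phi_emb_ofList (l : List Letter) :
    phi (emb (FreeMonoid.ofList l)) = FreeGroup.mk (l.map gmap) := by
  induction l with
  | nil => simp [FreeMonoid.ofList_nil, ← FreeGroup.one_eq_mk]
  | cons a t ih =>
    rw [FreeMonoid.ofList_cons, map_mul, map_mul, ih]
    have h1 : emb (FreeMonoid.of a) = FreeGroup.of a := rfl
    rw [h1]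
    have h2 : phi (FreeGroup.of a) = FreeGroup.mk [gmap a] := by
      cases a <;>
        simp [phi, gmap, FreeGroup.lift_apply_of, FreeGroup.of, FreeGroup.inv_mk, FreeGroup.invRev]
    rw [h2, FreeGroup.mul_mk]
    rfl

/-- Map a word over `Gen × Bool` back to `M`. -/
def mb (W : List (Gen × Bool)) : M := FreeMonoid.ofList (W.map hmap)

lemma step_pairDeletion {W₁ W₂ : List (Gen × Bool)} (h : FreeGroup.Red.Step W₁ W₂) :
    PairDeletion (mb W₁) (mb W₂) := by
  cases h with
  | @not L₁ L₂ x b =>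
    have key := PairDeletion.step (FreeMonoid.ofList (L₁.map hmap))
      (FreeMonoid.ofList (L₂.map hmap)) (hmap (x, b))
    have e1 : mb (L₁ ++ (x, b) :: (x, !b) :: L₂) =
        FreeMonoid.ofList (L₁.map hmap) * FreeMonoid.of (hmap (x, b)) *
          FreeMonoid.of ((hmap (x, b)).bar) * FreeMonoid.ofList (L₂.map hmap) := by
      apply FreeMonoid.toList.injective
      simp [mb, FreeMonoid.toList_mul, FreeMonoid.toList_ofList, FreeMonoid.toList_of,
        ← hmap_not]
    have e2 : mb (L₁ ++ L₂) =
        FreeMonoid.ofList (L₁.map hmap) * FreeMonoid.ofList (L₂.map hmap) := by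
      apply FreeMonoid.toList.injective
      simp [mb, FreeMonoid.toList_mul, FreeMonoid.toList_ofList]
    rw [e1, e2]
    exact key

lemma twoDyck_of_phi_emb_eq_one (w : M) (h1 : phi (emb w) = 1) : TwoDyck w := by
  have hw : phi (emb (FreeMonoid.ofList (FreeMonoid.toList w))) = 1 := by
    rw [FreeMonoid.ofList_toList]; exact h1
  rw [phi_emb_ofList] at hw
  have hred : FreeGroup.reduce ((FreeMonoid.toList w).map gmap) = [] := by
    have := congrArg FreeGroup.toWord hw
    rwa [FreeGroup.toWord_mk, FreeGroup.toWord_one] at this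
  have hRed : FreeGroup.Red ((FreeMonoid.toList w).map gmap) [] := by
    have := FreeGroup.reduce.red (L := (FreeMonoid.toList w).map gmap)
    rwa [hred] at this
  have hlift : Relation.ReflTransGen PairDeletion (mb ((FreeMonoid.toList w).map gmap)) (mb []) :=
    Relation.ReflTransGen.lift mb
    (fun _ _ hab => step_pairDeletion hab) _ _ hRed
  have e1 : mb ((FreeMonoid.toList w).map gmap) = w := by
    apply FreeMonoid.toList.injective
    simp [mb, FreeMonoid.toList_ofList, List.map_map, Function.comp_def, hmap_gmap]
  have e2 : mb ([] : List (Gen × Bool)) = 1 := rfl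
  rw [e1, e2] at hlift
  exact hlift

lemma oneDyck_phi_emb {w' : M} (h : OneDyck w') : phi (emb w') = 1 := by
  induction h with
  | empty => simp
  | mul hu hv ihu ihv => rw [map_mul, map_mul, ihu, ihv, one_mul]
  | brA hu ih =>
    rw [map_mul, map_mul, map_mul, map_mul, ih]
    have ha : phi (emb (FreeMonoid.of Letter.a)) = FreeGroup.of Gen.x := rfl
    have hb : phi (emb (FreeMonoid.of Letter.abar)) = (FreeGroup.of Gen.x)⁻¹ := rfl
    rw [ha, hb]; group
  | brB hu ih =>
    rw [map_mul, map_mul, map_mul, map_mul, ih]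
    have ha : phi (emb (FreeMonoid.of Letter.b)) = FreeGroup.of Gen.y := rfl
    have hb : phi (emb (FreeMonoid.of Letter.bbar)) = (FreeGroup.of Gen.y)⁻¹ := rfl
    rw [ha, hb]; group

/-! ### Residual finiteness of the free group on two generators -/

/-- `L` has no adjacent pair `(x,b) (x,!b)`. -/
def NoAdj (L : List (Gen × Bool)) : Prop :=
  ∀ i x b, L[i]? = some (x, b) → L[i + 1]? = some (x, !b) → False

lemma noAdj_toWord (g : F₂) : NoAdj g.toWord := by
  intro i x b h1 h2
  have hlen2 : i + 1 < g.toWord.length := (List.getElem?_eq_some_iff.mp h2).1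
  have hlen1 : i < g.toWord.length := by omega
  have hd1 : g.toWord.drop i = (x, b) :: g.toWord.drop (i + 1) := by
    rw [List.drop_eq_getElem_cons hlen1]
    congr 1
    have := (List.getElem?_eq_some_iff.mp h1).2
    rw [← this]
  have hd2 : g.toWord.drop (i + 1) = (x, !b) :: g.toWord.drop (i + 2) := by
    rw [List.drop_eq_getElem_cons hlen2]
    congr 1
    have := (List.getElem?_eq_some_iff.mp h2).2
    rw [← this]
  have hdecomp : g.toWord = g.toWord.take i ++ (x, b) :: (x, !b) :: g.toWord.drop (i + 2) := by
    conv_lhs => rw [← List.take_append_drop i g.toWord]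
    rw [hd1, hd2]
  exact FreeGroup.reduce.not ((FreeGroup.reduce_toWord g).trans hdecomp)

variable (L : List (Gen × Bool)) (x : Gen)

/-- The underlying function of the permutation associated to generator `x`. -/
def fnat (v : ℕ) : ℕ :=
  if 0 < v ∧ L[v - 1]? = some (x, true) then v - 1
  else if L[v]? = some (x, false) then v + 1
  else v

/-- Domain of the partial injection. -/
def DD (v : ℕ) : Prop :=
  L[v]? = some (x, false) ∨ (0 < v ∧ L[v - 1]? = some (x, true))

/-- Codomain of the partial injection. -/
def CC (v : ℕ) : Prop :=
  L[v]? = some (x, true) ∨ (0 < v ∧ L[v - 1]? = some (x, false))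

instance : DecidablePred (DD L x) := fun v => by unfold DD; infer_instance

instance : DecidablePred (CC L x) := fun v => by unfold CC; infer_instance

variable {L x}

lemma fnat_of_true {i : ℕ} (hi : L[i]? = some (x, true)) : fnat L x (i + 1) = i := by
  unfold fnat
  rw [if_pos ⟨Nat.succ_pos _, by simpa using hi⟩]
  omega

lemma fnat_of_false (hA : NoAdj L) {i : ℕ} (hi : L[i]? = some (x, false)) :
    fnat L x i = i + 1 := by
  unfold fnat
  rw [if_neg, if_pos hi]
  rintro ⟨hpos, hprev⟩
  refine hA (i - 1) x true hprev ?_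
  rwa [Nat.sub_add_cancel hpos]

lemma fnat_cases (hA : NoAdj L) {v : ℕ} (hv : DD L x v) :
    (L[v]? = some (x, false) ∧ fnat L x v = v + 1) ∨
      (0 < v ∧ L[v - 1]? = some (x, true) ∧ fnat L x v = v - 1) := by
  rcases hv with h | ⟨hpos, hprev⟩
  · exact Or.inl ⟨h, fnat_of_false hA h⟩
  · refine Or.inr ⟨hpos, hprev, ?_⟩
    have h := fnat_of_true (L := L) (x := x) hprev
    have hv1 : v - 1 + 1 = v := by omega
    rwa [hv1] at h

lemma fnat_lt (hA : NoAdj L) {v : ℕ} (hv : DD L x v) : fnat L x v < L.length + 1 := by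
  rcases fnat_cases hA hv with ⟨h, he⟩ | ⟨hpos, h, he⟩
  · have := (List.getElem?_eq_some_iff.mp h).1
    omega
  · have := (List.getElem?_eq_some_iff.mp h).1
    omega

lemma fnat_mem_CC (hA : NoAdj L) {v : ℕ} (hv : DD L x v) : CC L x (fnat L x v) := by
  rcases fnat_cases hA hv with ⟨h, he⟩ | ⟨hpos, h, he⟩
  · rw [he]
    exact Or.inr ⟨Nat.succ_pos _, by simpa using h⟩
  · rw [he]
    exact Or.inl h

lemma fnat_inj (hA : NoAdj L) {u v : ℕ} (hu : DD L x u) (hv : DD L x v)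
    (he : fnat L x u = fnat L x v) : u = v := by
  rcases fnat_cases hA hu with ⟨h1, e1⟩ | ⟨p1, h1, e1⟩ <;>
    rcases fnat_cases hA hv with ⟨h2, e2⟩ | ⟨p2, h2, e2⟩
  · omega
  · exfalso
    have huv : v - 1 = u + 1 := by omega
    rw [huv] at h2
    exact hA u x false h1 (by simpa using h2)
  · exfalso
    have huv : u - 1 = v + 1 := by omega
    rw [huv] at h1
    exact hA v x false h2 (by simpa using h1)
  · omega

lemma fnat_surj (hA : NoAdj L) {v : ℕ} (hv : CC L x v) :
    ∃ u, DD L x u ∧ fnat L x u = v := by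
  rcases hv with h | ⟨hpos, hprev⟩
  · exact ⟨v + 1, Or.inr ⟨Nat.succ_pos _, by simpa using h⟩, fnat_of_true h⟩
  · refine ⟨v - 1, Or.inl hprev, ?_⟩
    rw [fnat_of_false hA hprev]
    omega

variable (L x)

/-- The partial bijection as an equivalence of subtypes of `Fin (L.length + 1)`. -/
noncomputable def eqv (hA : NoAdj L) :
    { v : Fin (L.length + 1) // DD L x v.val } ≃ { v : Fin (L.length + 1) // CC L x v.val } :=
  Equiv.ofBijective
    (fun u => ⟨⟨fnat L x u.1.val, fnat_lt hA u.2⟩, fnat_mem_CC hA u.2⟩)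
    (by
      constructor
      · rintro ⟨⟨u, hu⟩, hDu⟩ ⟨⟨v, hv⟩, hDv⟩ he
        have h1 : fnat L x u = fnat L x v := congrArg (fun t => (t.1 : ℕ)) he
        have h2 : u = v := fnat_inj hA hDu hDv h1
        subst h2
        rfl
      · rintro ⟨⟨v, hv⟩, hCv⟩
        obtain ⟨u, hDu, hfu⟩ := fnat_surj hA hCv
        have hu : u < L.length + 1 := by
          rcases hDu with h | ⟨hpos, h⟩
          · have := (List.getElem?_eq_some_iff.mp h).1; omega
          · have := (List.getElem?_eq_some_iff.mp h).1; omega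
        exact ⟨⟨⟨u, hu⟩, hDu⟩, by simp [hfu]⟩)

/-- The permutation of `Fin (L.length + 1)` associated to the generator `x`. -/
noncomputable def sigmaPerm (hA : NoAdj L) : Equiv.Perm (Fin (L.length + 1)) :=
  Equiv.extendSubtype (eqv L x hA)

variable {L x}

lemma sigmaPerm_val_of_mem (hA : NoAdj L) {v : ℕ} (hv : v < L.length + 1)
    (hD : DD L x v) : (sigmaPerm L x hA ⟨v, hv⟩ : ℕ) = fnat L x v := by
  have := Equiv.extendSubtype_apply_of_mem (eqv L x hA) ⟨v, hv⟩ hD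
  rw [sigmaPerm, this]
  rfl

lemma sigmaPerm_true (hA : NoAdj L) {i : ℕ} (hi : L[i]? = some (x, true))
    (h : i + 1 < L.length + 1) : sigmaPerm L x hA ⟨i + 1, h⟩ = ⟨i, by omega⟩ := by
  apply Fin.ext
  have hD : DD L x (i + 1) := Or.inr ⟨Nat.succ_pos _, by simpa using hi⟩
  rw [sigmaPerm_val_of_mem hA h hD, fnat_of_true hi]

lemma sigmaPerm_false (hA : NoAdj L) {i : ℕ} (hi : L[i]? = some (x, false))
    (h : i < L.length + 1) (h' : i + 1 < L.length + 1) :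
    sigmaPerm L x hA ⟨i, h⟩ = ⟨i + 1, h'⟩ := by
  apply Fin.ext
  have hD : DD L x i := Or.inl hi
  rw [sigmaPerm_val_of_mem hA h hD, fnat_of_false hA hi]

lemma sigmaPerm_inv_false (hA : NoAdj L) {i : ℕ} (hi : L[i]? = some (x, false))
    (h : i + 1 < L.length + 1) :
    (sigmaPerm L x hA)⁻¹ ⟨i + 1, h⟩ = ⟨i, by omega⟩ := by
  have := sigmaPerm_false hA hi (by omega) h
  rw [← this, ← Equiv.Perm.mul_apply, inv_mul_cancel, Equiv.Perm.one_apply]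

/-- The word-suffix computation: the product of the permutations of the suffix
`L.drop k` sends `L.length` to `k`. -/
lemma suffix_apply (hA : NoAdj L) :
    ∀ (W : List (Gen × Bool)) (k : ℕ), k ≤ L.length → L.drop k = W →
      ((W.map fun t => cond t.2 (sigmaPerm L t.1 hA) (sigmaPerm L t.1 hA)⁻¹).prod
          (Fin.last L.length) : ℕ) = k := by
  intro W
  induction W with
  | nil =>
    intro k hk hd
    have hlen : L.length - k = 0 := by
      have := congrArg List.length hd
      simpa using this
    have hkn : k = L.length := by omega
    simp [hkn, Fin.last]
  | cons t W ih =>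
    intro k hk hd
    have hlenW : L.length - k = W.length + 1 := by
      have := congrArg List.length hd
      simpa using this
    have hk' : k < L.length := by omega
    have h1 : L[k]? = some t := by
      have : (L.drop k)[0]? = L[k + 0]? := List.getElem?_drop
      rw [hd] at this
      simpa using this.symm
    have h2 : L.drop (k + 1) = W := by
      have : List.drop 1 (L.drop k) = L.drop (k + 1) := List.drop_drop
      rw [hd] at this
      simpa using this.symm
    obtain ⟨xg, b⟩ := t
    have hinner : ((W.map fun t => cond t.2 (sigmaPerm L t.1 hA) (sigmaPerm L t.1 hA)⁻¹).prod
        (Fin.last L.length) : ℕ) = k + 1 := ih (k + 1) hk' h2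
    have hinner' : (W.map fun t => cond t.2 (sigmaPerm L t.1 hA) (sigmaPerm L t.1 hA)⁻¹).prod
        (Fin.last L.length) = ⟨k + 1, by omega⟩ := Fin.ext hinner
    simp only [List.map_cons, List.prod_cons, Equiv.Perm.mul_apply, hinner']
    cases b with
    | false =>
      simp only [cond_false]
      rw [sigmaPerm_inv_false hA h1]
    | true =>
      simp only [cond_true]
      rw [sigmaPerm_true hA h1]

/-- Residual finiteness of `F₂`, in the form we need. -/
lemma eq_one_of_forall_perm (g : F₂)
    (hg : ∀ (m : ℕ) (ψ : F₂ →* Equiv.Perm (Fin m)), ψ g = 1) : g = 1 := by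
  by_contra hne
  have hA : NoAdj g.toWord := noAdj_toWord g
  have hlen : g.toWord ≠ [] := fun h => hne (FreeGroup.toWord_eq_nil_iff.mp h)
  have hn : 0 < g.toWord.length := List.length_pos_iff.mpr hlen
  set ψ : F₂ →* Equiv.Perm (Fin (g.toWord.length + 1)) :=
    FreeGroup.lift (fun y => sigmaPerm g.toWord y hA) with hψ
  have h1 : ψ g = 1 := hg _ ψ
  have h2 : (ψ (FreeGroup.mk g.toWord) (Fin.last g.toWord.length) : ℕ) = 0 := by
    rw [hψ, FreeGroup.lift_mk]
    exact suffix_apply hA g.toWord 0 (Nat.zero_le _) List.drop_zero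
  rw [FreeGroup.mk_toWord, h1] at h2
  simp only [Equiv.Perm.one_apply, Fin.val_last] at h2
  omega

end Aux

/-- The closure of the one-sided Dyck language `D'₂*` in `M`, in the topology
induced from the profinite topology on `F`, is contained in the two-sided Dyck
language `D₂*`. -/
theorem closure_oneDyck_subset_twoDyck (w : M)
    (h : ∀ U : Subgroup F, U.Normal → U.FiniteIndex →
        ∃ w' : M, OneDyck w' ∧ (emb w)⁻¹ * emb w' ∈ U) :
    TwoDyck w := by
  apply twoDyck_of_phi_emb_eq_one
  apply eq_one_of_forall_perm
  intro m ψ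
  have hnorm : (MonoidHom.ker (ψ.comp phi)).Normal := MonoidHom.normal_ker _
  have hfi : (MonoidHom.ker (ψ.comp phi)).FiniteIndex := Subgroup.finiteIndex_ker _
  obtain ⟨w', hw', hker⟩ := h _ hnorm hfi
  have hk : (ψ.comp phi) ((emb w)⁻¹ * emb w') = 1 := MonoidHom.mem_ker.mp hker
  rw [map_mul, map_inv, MonoidHom.comp_apply, MonoidHom.comp_apply,
    oneDyck_phi_emb hw', map_one, mul_one] at hk
  have := congrArg (·⁻¹) hk
  simpa using this
end

section
/- Let w be a word in the two-sided Dyck language D₂* over the alphabet {a, ā, b, b̄}, and let U be any normal subgroup of finite index in the free group F on the four free generators a, ā, b, b̄. Then there exists a word w' in the one-sided Dyck language D'₂* such that the images of w and w' in F lie in the same coset of U. That is, D₂* is contained in the closure of D'₂* in the free monoid M in the topology induced from the profinite topology on F. -/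
section Aux

variable {Q : Type*} [Group Q] [Finite Q] (ρ : F →* Q)

/-- The image, mod `ρ`, of the one-sided Dyck language. -/
def Tset (g : Q) : Prop := ∃ w' : M, OneDyck w' ∧ ρ (emb w') = g

lemma emb_of (l : Letter) : emb (FreeMonoid.of l) = FreeGroup.of l := rfl

variable {ρ}

lemma Tset.one : Tset ρ 1 := ⟨1, OneDyck.empty, by simp⟩

lemma Tset.mul {g h : Q} (hg : Tset ρ g) (hh : Tset ρ h) : Tset ρ (g * h) := by
  obtain ⟨u, hu, rfl⟩ := hg
  obtain ⟨v, hv, rfl⟩ := hh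
  exact ⟨u * v, hu.mul hv, by simp⟩

lemma Tset.pow {g : Q} (hg : Tset ρ g) : ∀ n : ℕ, Tset ρ (g ^ n)
  | 0 => by simpa using Tset.one
  | n + 1 => by rw [pow_succ]; exact (hg.pow n).mul hg

lemma pow_pred_eq_inv (g : Q) : g ^ (Nat.card Q - 1) = g⁻¹ := by
  have h1 : 0 < Nat.card Q := Nat.card_pos
  refine eq_inv_of_mul_eq_one_left ?_
  rw [← pow_succ, Nat.sub_one_add_one_eq_of_pos h1, pow_card_eq_one']

lemma Tset.inv {g : Q} (hg : Tset ρ g) : Tset ρ g⁻¹ := by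
  rw [← pow_pred_eq_inv g]; exact hg.pow _

lemma Tset.brA {t : Q} (ht : Tset ρ t) :
    Tset ρ (ρ (FreeGroup.of Letter.a) * t * ρ (FreeGroup.of Letter.abar)) := by
  obtain ⟨u, hu, rfl⟩ := ht
  exact ⟨_, hu.brA, by simp [emb_of]⟩

lemma Tset.brB {t : Q} (ht : Tset ρ t) :
    Tset ρ (ρ (FreeGroup.of Letter.b) * t * ρ (FreeGroup.of Letter.bbar)) := by
  obtain ⟨u, hu, rfl⟩ := ht
  exact ⟨_, hu.brB, by simp [emb_of]⟩

/-- Nested powers `a^k ā^k` are one-sided Dyck words. -/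
lemma oneDyck_pow_pow_A : ∀ k : ℕ,
    OneDyck ((FreeMonoid.of Letter.a) ^ k * (FreeMonoid.of Letter.abar) ^ k)
  | 0 => by simpa using OneDyck.empty
  | k + 1 => by
      have h := (oneDyck_pow_pow_A k).brA
      rw [pow_succ' (FreeMonoid.of Letter.a), pow_succ (FreeMonoid.of Letter.abar)]
      simpa [mul_assoc] using h

lemma oneDyck_pow_pow_B : ∀ k : ℕ,
    OneDyck ((FreeMonoid.of Letter.b) ^ k * (FreeMonoid.of Letter.bbar) ^ k)
  | 0 => by simpa using OneDyck.empty
  | k + 1 => by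
      have h := (oneDyck_pow_pow_B k).brB
      rw [pow_succ' (FreeMonoid.of Letter.b), pow_succ (FreeMonoid.of Letter.bbar)]
      simpa [mul_assoc] using h

/-- For every letter `l`, the image of `l · l.bar` lies in `Tset`. -/
lemma tset_pair : ∀ l : Letter,
    Tset ρ (ρ (FreeGroup.of l) * ρ (FreeGroup.of l.bar))
  | .a => ⟨_, OneDyck.empty.brA, by simp [emb_of, Letter.bar]⟩
  | .b => ⟨_, OneDyck.empty.brB, by simp [emb_of, Letter.bar]⟩
  | .abar => by
      set A := ρ (FreeGroup.of Letter.a)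
      set Abar := ρ (FreeGroup.of Letter.abar)
      have key : Tset ρ (A ^ (Nat.card Q - 1) * Abar ^ (Nat.card Q - 1)) :=
        ⟨_, oneDyck_pow_pow_A (Nat.card Q - 1), by simp [emb_of, A, Abar]⟩
      rw [pow_pred_eq_inv, pow_pred_eq_inv] at key
      have := key.inv
      rw [mul_inv_rev, inv_inv, inv_inv] at this
      simpa [Letter.bar] using this
  | .bbar => by
      set B := ρ (FreeGroup.of Letter.b)
      set Bbar := ρ (FreeGroup.of Letter.bbar)
      have key : Tset ρ (B ^ (Nat.card Q - 1) * Bbar ^ (Nat.card Q - 1)) :=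
        ⟨_, oneDyck_pow_pow_B (Nat.card Q - 1), by simp [emb_of, B, Bbar]⟩
      rw [pow_pred_eq_inv, pow_pred_eq_inv] at key
      have := key.inv
      rw [mul_inv_rev, inv_inv, inv_inv] at this
      simpa [Letter.bar] using this

/-- Helper: from conjugation-stability by `g`, deduce stability by `g⁻¹`. -/
lemma conj_inv_of_conj {g : Q} (hg : ∀ t, Tset ρ t → Tset ρ (g * t * g⁻¹)) :
    ∀ t, Tset ρ t → Tset ρ (g⁻¹ * t * (g⁻¹)⁻¹) := by
  have hpow : ∀ k, ∀ t, Tset ρ t → Tset ρ (g ^ k * t * (g ^ k)⁻¹) := by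
    intro k
    induction k with
    | zero => intro t ht; simpa using ht
    | succ k ih =>
        intro t ht
        have := hg _ (ih t ht)
        have heq : g * (g ^ k * t * (g ^ k)⁻¹) * g⁻¹
            = g ^ (k + 1) * t * (g ^ (k + 1))⁻¹ := by
          rw [pow_succ']; group
        rwa [heq] at this
  intro t ht
  have := hpow (Nat.card Q - 1) t ht
  rwa [pow_pred_eq_inv] at this

/-- `Tset` is stable under conjugation by the image of any element of `F`. -/
lemma tset_conj (f : F) : ∀ t, Tset ρ t → Tset ρ (ρ f * t * (ρ f)⁻¹) := by
  -- first: conjugation by an element of Tset itself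
  have hself : ∀ {s : Q}, Tset ρ s → ∀ t, Tset ρ t → Tset ρ (s * t * s⁻¹) :=
    fun hs t ht => (hs.mul ht).mul hs.inv
  -- conjugation by A and B
  have hA : ∀ t, Tset ρ t →
      Tset ρ (ρ (FreeGroup.of Letter.a) * t * (ρ (FreeGroup.of Letter.a))⁻¹) := by
    intro t ht
    have h1 := (ht.brA).mul (tset_pair (ρ := ρ) Letter.a).inv
    have heq : ρ (FreeGroup.of Letter.a) * t * ρ (FreeGroup.of Letter.abar) *
        (ρ (FreeGroup.of Letter.a) * ρ (FreeGroup.of (Letter.a).bar))⁻¹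
        = ρ (FreeGroup.of Letter.a) * t * (ρ (FreeGroup.of Letter.a))⁻¹ := by
      simp only [Letter.bar]; group
    rwa [heq] at h1
  have hB : ∀ t, Tset ρ t →
      Tset ρ (ρ (FreeGroup.of Letter.b) * t * (ρ (FreeGroup.of Letter.b))⁻¹) := by
    intro t ht
    have h1 := (ht.brB).mul (tset_pair (ρ := ρ) Letter.b).inv
    have heq : ρ (FreeGroup.of Letter.b) * t * ρ (FreeGroup.of Letter.bbar) *
        (ρ (FreeGroup.of Letter.b) * ρ (FreeGroup.of (Letter.b).bar))⁻¹
        = ρ (FreeGroup.of Letter.b) * t * (ρ (FreeGroup.of Letter.b))⁻¹ := by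
      simp only [Letter.bar]; group
    rwa [heq] at h1
  -- conjugation by Ā and B̄
  have hAbar : ∀ t, Tset ρ t →
      Tset ρ (ρ (FreeGroup.of Letter.abar) * t * (ρ (FreeGroup.of Letter.abar))⁻¹) := by
    intro t ht
    have h1 : Tset ρ (ρ (FreeGroup.of Letter.abar) * ρ (FreeGroup.of Letter.a)) := by
      simpa [Letter.bar] using tset_pair (ρ := ρ) Letter.abar
    have h2 := conj_inv_of_conj hA t ht
    have h3 := hself h1 _ h2
    have heq : ρ (FreeGroup.of Letter.abar) * ρ (FreeGroup.of Letter.a) *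
        ((ρ (FreeGroup.of Letter.a))⁻¹ * t * ((ρ (FreeGroup.of Letter.a))⁻¹)⁻¹) *
        (ρ (FreeGroup.of Letter.abar) * ρ (FreeGroup.of Letter.a))⁻¹
        = ρ (FreeGroup.of Letter.abar) * t * (ρ (FreeGroup.of Letter.abar))⁻¹ := by
      group
    rwa [heq] at h3
  have hBbar : ∀ t, Tset ρ t →
      Tset ρ (ρ (FreeGroup.of Letter.bbar) * t * (ρ (FreeGroup.of Letter.bbar))⁻¹) := by
    intro t ht
    have h1 : Tset ρ (ρ (FreeGroup.of Letter.bbar) * ρ (FreeGroup.of Letter.b)) := by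
      simpa [Letter.bar] using tset_pair (ρ := ρ) Letter.bbar
    have h2 := conj_inv_of_conj hB t ht
    have h3 := hself h1 _ h2
    have heq : ρ (FreeGroup.of Letter.bbar) * ρ (FreeGroup.of Letter.b) *
        ((ρ (FreeGroup.of Letter.b))⁻¹ * t * ((ρ (FreeGroup.of Letter.b))⁻¹)⁻¹) *
        (ρ (FreeGroup.of Letter.bbar) * ρ (FreeGroup.of Letter.b))⁻¹
        = ρ (FreeGroup.of Letter.bbar) * t * (ρ (FreeGroup.of Letter.bbar))⁻¹ := by
      group
    rwa [heq] at h3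
  induction f using FreeGroup.induction_on with
  | C1 => intro t ht; simpa using ht
  | of x =>
      cases x with
      | a => simpa using hA
      | abar => simpa using hAbar
      | b => simpa using hB
      | bbar => simpa using hBbar
  | inv_of x ih =>
      have := conj_inv_of_conj ih
      simpa using this
  | mul x y ihx ihy =>
      intro t ht
      have := ihx _ (ihy t ht)
      have heq : ρ x * (ρ y * t * (ρ y)⁻¹) * (ρ x)⁻¹
          = ρ (x * y) * t * (ρ (x * y))⁻¹ := by
        rw [map_mul]; group
      rwa [heq] at this

/-- Main auxiliary result: the image of any two-sided Dyck word is in `Tset`. -/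
lemma tset_of_twoDyck (w : M) (hw : TwoDyck w) : Tset ρ (ρ (emb w)) := by
  induction hw using Relation.ReflTransGen.head_induction_on with
  | refl => simpa using Tset.one (ρ := ρ)
  | head h' _ ih =>
      obtain ⟨u, v, l⟩ := h'
      have hcv : ρ (emb (u * v)) = ρ (emb u) * ρ (emb v) := by simp
      rw [hcv] at ih
      have hconj := tset_conj (ρ := ρ) (emb u) _ (tset_pair l)
      have := hconj.mul ih
      have heq : ρ (emb u) * (ρ (FreeGroup.of l) * ρ (FreeGroup.of l.bar)) *
          (ρ (emb u))⁻¹ * (ρ (emb u) * ρ (emb v))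
          = ρ (emb (u * FreeMonoid.of l * FreeMonoid.of l.bar * v)) := by
        simp [emb_of]; group
      rwa [heq] at this

end Aux

/-- Every two-sided Dyck word lies in the closure of the one-sided Dyck
language `D'₂*` in `M`, in the topology induced from the profinite topology
on `F`. -/
theorem twoDyck_subset_closure_oneDyck (w : M) (hw : TwoDyck w)
    (U : Subgroup F) (hN : U.Normal) (hFI : U.FiniteIndex) :
    ∃ w' : M, OneDyck w' ∧ (emb w)⁻¹ * emb w' ∈ U := by
  have : Finite (F ⧸ U) := Subgroup.finite_quotient_of_finiteIndex
  obtain ⟨w', hw', heq⟩ := tset_of_twoDyck (ρ := QuotientGroup.mk' U) w hw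
  refine ⟨w', hw', ?_⟩
  rwa [← QuotientGroup.eq, eq_comm]
end
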